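/- Let p₀,…,p_k ∈ ℝⁿ (k ≥ 1), let λ₀,…,λ_k ∈ (0,1) with Σλᵢ = 1, let p := Σλᵢpᵢ, and assume the pᵢ are not all equal to p. Let Q := conv{p−p₀,…,p−p_k}, let F := span{p₀−p,…,p_k−p}, and let K be the distance from the origin to the boundary of Q relative to the subspace F. Then K > 0 and, for every nonzero z ∈ conv{p₀−p,…,p_k−p}, setting ζ := z/|z|, one has min_{0≤i≤k} ⟨pᵢ−p, x⟩ ≤ −K|⟨ζ, x⟩| for all x ∈ ℝⁿ. -/

import Mathlib

open Set Metric Filter MeasureTheory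
open scoped RealInnerProductSpace Topology NNReal

noncomputable section

abbrev Euc (n : ℕ) := EuclideanSpace ℝ (Fin n)

def infLap {n : ℕ} (φ : Euc n → ℝ) (x : Euc n) : ℝ :=
  ⟪fderiv ℝ (gradient φ) x (gradient φ x), gradient φ x⟫

def IsViscSubsol {n : ℕ} (Ω : Set (Euc n)) (f : Euc n → ℝ → ℝ) (u : Euc n → ℝ) : Prop :=
  ContinuousOn u Ω ∧
  ∀ x₀ ∈ Ω, ∀ φ : Euc n → ℝ, ContDiff ℝ 2 φ →
    IsLocalMaxOn (fun x => u x - φ x) Ω x₀ → -infLap φ x₀ - f x₀ (u x₀) ≤ 0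

def IsViscSupersol {n : ℕ} (Ω : Set (Euc n)) (f : Euc n → ℝ → ℝ) (u : Euc n → ℝ) : Prop :=
  ContinuousOn u Ω ∧
  ∀ x₀ ∈ Ω, ∀ φ : Euc n → ℝ, ContDiff ℝ 2 φ →
    IsLocalMinOn (fun x => u x - φ x) Ω x₀ → 0 ≤ -infLap φ x₀ - f x₀ (u x₀)

def IsDirichletSol {n : ℕ} (Ω : Set (Euc n)) (u : Euc n → ℝ) : Prop :=
  ContinuousOn u (closure Ω) ∧ (∀ x ∈ frontier Ω, u x = 0) ∧
  IsViscSubsol Ω (fun _ _ => 1) u ∧ IsViscSupersol Ω (fun _ _ => 1) u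

def IntSphereCond {n : ℕ} (Ω : Set (Euc n)) : Prop :=
  ∀ y ∈ frontier Ω, ∃ z : Euc n, ∃ R : ℝ, 0 < R ∧ ball z R ⊆ Ω ∧ y ∈ sphere z R

theorem aux_cross {n : ℕ} {Q : Set (EuclideanSpace ℝ (Fin n))} (hQ : IsClosed Q)
    (h0 : (0 : EuclideanSpace ℝ (Fin n)) ∈ Q) {y : EuclideanSpace ℝ (Fin n)}
    (hy : y ∈ affineSpan ℝ Q) (hyQ : y ∉ Q) :
    ∃ t₀ : ℝ, t₀ ∈ Icc (0:ℝ) 1 ∧ t₀ < 1 ∧ t₀ • y ∈ intrinsicFrontier ℝ Q := by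
  set S : Set ℝ := {t | t • y ∈ Q} ∩ Icc 0 1 with hS
  have hSclosed : IsClosed S :=
    (hQ.preimage (continuous_id.smul continuous_const)).inter isClosed_Icc
  have hSne : S.Nonempty := ⟨0, by simp [hS, h0], by simp⟩
  have hSbdd : BddAbove S := ⟨1, fun t ht => ht.2.2⟩
  set t₀ := sSup S with ht₀
  have ht₀S : t₀ ∈ S := hSclosed.csSup_mem hSne hSbdd
  have ht₀Icc : t₀ ∈ Icc (0:ℝ) 1 := ht₀S.2
  have ht₀ne1 : t₀ ≠ 1 := by
    intro h
    apply hyQ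
    have := ht₀S.1
    rw [h] at this
    simpa using this
  have ht₀lt1 : t₀ < 1 := lt_of_le_of_ne ht₀Icc.2 ht₀ne1
  refine ⟨t₀, ht₀Icc, ht₀lt1, ?_⟩
  have hmem : ∀ t : ℝ, t • y ∈ affineSpan ℝ Q := by
    intro t
    have := AffineMap.lineMap_mem (Q := affineSpan ℝ Q) t (mem_affineSpan ℝ h0) hy
    simpa [AffineMap.lineMap_apply_module] using this
  set g : ℝ → affineSpan ℝ Q := fun t => ⟨t • y, hmem t⟩ with hg
  have hgc : Continuous g :=
    Continuous.subtype_mk (continuous_id.smul continuous_const) _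
  rw [mem_intrinsicFrontier]
  refine ⟨g t₀, ?_, rfl⟩
  rw [frontier, mem_diff]
  constructor
  · exact subset_closure (by simpa [hg] using ht₀S.1)
  · intro hint
    have hopen : IsOpen (g ⁻¹' interior (((↑) : affineSpan ℝ Q → _) ⁻¹' Q)) :=
      isOpen_interior.preimage hgc
    obtain ⟨ε, hε, hball⟩ := Metric.isOpen_iff.mp hopen t₀ hint
    set t₁ := min (t₀ + ε / 2) ((t₀ + 1) / 2) with ht₁
    have ht₁gt : t₀ < t₁ := by
      apply lt_min <;> linarith
    have ht₁le1 : t₁ ≤ 1 := le_trans (min_le_right _ _) (by linarith)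
    have ht₁ball : t₁ ∈ Metric.ball t₀ ε := by
      rw [Metric.mem_ball, Real.dist_eq, abs_of_pos (by linarith)]
      have : t₁ ≤ t₀ + ε / 2 := min_le_left _ _
      linarith
    have ht₁Q : t₁ • y ∈ Q := by
      have := interior_subset (hball ht₁ball)
      simpa [hg] using this
    have : t₁ ≤ t₀ := le_csSup hSbdd ⟨ht₁Q, ⟨by linarith [ht₀Icc.1], ht₁le1⟩⟩
    linarith

theorem aux_int {n m : ℕ} (v : Fin (m + 1) → EuclideanSpace ℝ (Fin n))
    (lam : Fin (m + 1) → ℝ) (hpos : ∀ i, 0 < lam i) (hsum : ∑ i, lam i = 1)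
    (hzero : ∑ i, lam i • v i = 0) :
    (0 : EuclideanSpace ℝ (Fin n)) ∈ intrinsicInterior ℝ (convexHull ℝ (Set.range v)) := by
  classical
  set Q : Set (EuclideanSpace ℝ (Fin n)) := convexHull ℝ (Set.range v) with hQdef
  set V : Submodule ℝ (EuclideanSpace ℝ (Fin n)) := Submodule.span ℝ (Set.range v) with hV
  set T : (Fin (m + 1) → ℝ) →ₗ[ℝ] (EuclideanSpace ℝ (Fin n)) × ℝ :=
    (Fintype.linearCombination ℝ v).prod (Fintype.linearCombination ℝ (fun _ => (1:ℝ))) with hT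
  have hTapply : ∀ c : Fin (m+1) → ℝ, T c = (∑ i, c i • v i, ∑ i, c i) := by
    intro c
    simp [hT, Fintype.linearCombination_apply]
  have hlamT : T lam = (0, 1) := by rw [hTapply, hzero, hsum]
  have hrange : ∀ y ∈ V, ((y, (0:ℝ))) ∈ LinearMap.range T := by
    intro y hy
    induction hy using Submodule.span_induction with
    | mem x hx =>
        obtain ⟨i, rfl⟩ := hx
        refine ⟨Pi.single i 1 - lam, ?_⟩
        rw [map_sub, hlamT, hTapply]
        simp [Pi.single_apply, Finset.sum_ite_eq']
    | zero => exact zero_mem _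
    | add a b _ _ ha hb => exact (by simpa using add_mem ha hb :)
    | smul a x _ hx => exact (by simpa [Prod.smul_mk] using Submodule.smul_mem _ a hx :)
  obtain ⟨g, hg⟩ := LinearMap.exists_rightInverse_of_surjective T.rangeRestrict
    (LinearMap.range_eq_top.mpr T.surjective_rangeRestrict)
  have hTg : ∀ w : LinearMap.range T, T (g w) = (w : (EuclideanSpace ℝ (Fin n)) × ℝ) := by
    intro w
    have := congrArg (fun f => (f w : LinearMap.range T)) hg
    simpa using congrArg Subtype.val this
  set G : EuclideanSpace ℝ (Fin n) → (Fin (m+1) → ℝ) :=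
    fun y => g ⟨((V.orthogonalProjectionOnto y : EuclideanSpace ℝ (Fin n)), 0),
      hrange _ (V.orthogonalProjectionOnto y).2⟩ with hG
  have hGcont : Continuous G := by
    apply g.continuous_of_finiteDimensional.comp
    apply Continuous.subtype_mk
    exact ((V.orthogonalProjectionOnto).continuous.subtype_val).prodMk continuous_const
  have hGeq : ∀ y, ∀ hy : y ∈ V, G y = g ⟨(y, 0), hrange y hy⟩ := by
    intro y hy
    rw [hG]
    exact congrArg g (Subtype.ext (by
      rw [Prod.mk.injEq]
      exact ⟨Submodule.starProjection_eq_self_iff.mpr hy, rfl⟩))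
  have hGV : ∀ y ∈ V, (∑ i, G y i • v i = y) ∧ (∑ i, G y i = 0) := by
    intro y hy
    rw [hGeq y hy]
    have := hTg ⟨(y, 0), hrange y hy⟩
    rw [hTapply] at this
    exact ⟨congrArg Prod.fst this, congrArg Prod.snd this⟩
  have hcrit : ∀ y ∈ V, (∀ i, 0 < lam i + G y i) → y ∈ Q := by
    intro y hy hposc
    have h := hGV y hy
    have hsum' : ∑ i, (lam i + G y i) = 1 := by
      rw [Finset.sum_add_distrib, hsum, h.2]; ring
    have hcm : y = Finset.univ.centerMass (fun i => lam i + G y i) v := by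
      rw [Finset.centerMass, hsum']
      simp only [inv_one, one_smul]
      rw [show ∑ i, (lam i + G y i) • v i = ∑ i, lam i • v i + ∑ i, G y i • v i by
        rw [← Finset.sum_add_distrib]; congr 1; ext i; rw [add_smul]]
      rw [hzero, h.1, zero_add]
    rw [hcm]
    exact Finset.centerMass_mem_convexHull _ (fun i _ => (hposc i).le)
      (by rw [hsum']; norm_num) (fun i _ => mem_range_self i)
  -- the open set of good y's
  set U : Set (EuclideanSpace ℝ (Fin n)) := {y | ∀ i, 0 < lam i + G y i} with hU
  have hUopen : IsOpen U := by
    have : U = ⋂ i, {y | 0 < lam i + G y i} := by ext y; simp [hU]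
    rw [this]
    exact isOpen_iInter_of_finite fun i =>
      isOpen_lt continuous_const (continuous_const.add ((continuous_apply i).comp hGcont))
  have hU0 : (0 : EuclideanSpace ℝ (Fin n)) ∈ U := by
    intro i
    have : G 0 = 0 := by
      rw [hGeq 0 (zero_mem V)]
      have : (⟨((0:EuclideanSpace ℝ (Fin n)), (0:ℝ)), hrange 0 (zero_mem V)⟩ :
          LinearMap.range T) = 0 := Subtype.ext (by simp)
      rw [this, map_zero]
    simp [this, hpos i]
  -- 0 ∈ Q
  have h0Q : (0 : EuclideanSpace ℝ (Fin n)) ∈ Q := hcrit 0 (zero_mem V) hU0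
  -- affineSpan Q ⊆ V
  have hspan : ∀ x, x ∈ affineSpan ℝ Q → x ∈ V := by
    intro x hx
    have hQV : Q ⊆ (V.toAffineSubspace : Set (EuclideanSpace ℝ (Fin n))) := by
      apply convexHull_min _ (V.toAffineSubspace.convex)
      intro w hw
      exact Submodule.subset_span hw
    exact affineSpan_le.mpr hQV hx
  -- conclude
  rw [mem_intrinsicInterior]
  refine ⟨⟨0, mem_affineSpan ℝ h0Q⟩, ?_, rfl⟩
  rw [mem_interior_iff_mem_nhds, nhds_subtype_eq_comap]
  refine Filter.mem_comap.mpr ⟨U, hUopen.mem_nhds hU0, ?_⟩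
  rintro ⟨x, hx⟩ hxU
  exact hcrit x (hspan x hx) hxU

theorem stmt5 {n k : ℕ} (hk : 1 ≤ k)
    (ps : Fin (k + 1) → Euc n) (lam : Fin (k + 1) → ℝ)
    (hlam : ∀ i, lam i ∈ Ioo (0:ℝ) 1) (hsum : (∑ i, lam i) = 1)
    (p : Euc n) (hp : p = ∑ i, lam i • ps i) (hne : ∃ i, ps i ≠ p)
    (K : ℝ)
    (hK : K = infDist (0 : Euc n)
      (intrinsicFrontier ℝ (convexHull ℝ (Set.range fun i => p - ps i)))) :
    0 < K ∧ ∀ z ∈ convexHull ℝ (Set.range fun i => ps i - p), z ≠ 0 →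
      ∀ x : Euc n,
        (Finset.univ.inf' Finset.univ_nonempty fun i => ⟪ps i - p, x⟫)
          ≤ -(K * |⟪(‖z‖⁻¹ : ℝ) • z, x⟫|) := by
  classical
  set v : Fin (k + 1) → Euc n := fun i => p - ps i with hv
  set Q : Set (Euc n) := convexHull ℝ (Set.range v) with hQdef
  have hzero : ∑ i, lam i • v i = 0 := by
    simp only [hv, smul_sub, Finset.sum_sub_distrib, ← Finset.sum_smul, hsum, one_smul, ← hp,
      sub_self]
  have h0int : (0 : Euc n) ∈ intrinsicInterior ℝ Q :=
    aux_int v lam (fun i => (hlam i).1) hsum hzero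
  have h0Q : (0 : Euc n) ∈ Q := intrinsicInterior_subset h0int
  have hQclosed : IsClosed Q := ((Set.finite_range v).isCompact_convexHull ℝ).isClosed
  have hQbdd := ((Set.finite_range v).isCompact_convexHull ℝ).isBounded
  -- intrinsic frontier nonempty
  obtain ⟨i₀, hi₀⟩ := hne
  have hvi₀ : v i₀ ≠ 0 := by simp [hv, sub_eq_zero]; exact fun h => hi₀ h.symm
  have hvQ : v i₀ ∈ Q := subset_convexHull ℝ _ (mem_range_self i₀)
  obtain ⟨R, hR⟩ := hQbdd.subset_closedBall 0
  have hmemspan : ∀ (c : ℝ) (u : Euc n), u ∈ Q → c • u ∈ affineSpan ℝ Q := by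
    intro c u hu
    have := AffineMap.lineMap_mem (Q := affineSpan ℝ Q) c (mem_affineSpan ℝ h0Q)
      (mem_affineSpan ℝ hu)
    simpa [AffineMap.lineMap_apply_module] using this
  have hfne : (intrinsicFrontier ℝ Q).Nonempty := by
    set c : ℝ := (|R| + 1) / ‖v i₀‖ with hc
    have hy : c • v i₀ ∈ affineSpan ℝ Q := hmemspan c _ hvQ
    have hynQ : c • v i₀ ∉ Q := by
      intro hmem
      have := hR hmem
      have hnorm : ‖v i₀‖ > 0 := norm_pos_iff.mpr hvi₀
      rw [mem_closedBall, dist_zero_right, norm_smul, Real.norm_eq_abs,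
        abs_of_nonneg (by positivity : (0:ℝ) ≤ (|R| + 1) / ‖v i₀‖),
        div_mul_cancel₀ _ (ne_of_gt hnorm)] at this
      have : |R| + 1 ≤ |R| := le_trans this (le_abs_self R)
      linarith
    obtain ⟨t₀, _, _, hmem⟩ := aux_cross hQclosed h0Q hy hynQ
    exact ⟨_, hmem⟩
  have hfclosed : IsClosed (intrinsicFrontier ℝ Q) :=
    isClosed_intrinsicFrontier ((affineSpan ℝ Q).closed_of_finiteDimensional)
  have h0nf : (0 : Euc n) ∉ intrinsicFrontier ℝ Q := by
    rw [← closure_diff_intrinsicInterior]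
    exact fun h => h.2 h0int
  have hKpos : 0 < K := by
    rw [hK]
    exact (hfclosed.notMem_iff_infDist_pos hfne).mp h0nf
  refine ⟨hKpos, ?_⟩
  -- membership criterion: small vectors in affine span are in Q
  have hball : ∀ u : Euc n, u ∈ affineSpan ℝ Q → ‖u‖ ≤ K → u ∈ Q := by
    intro u hu hnorm
    by_contra hun
    obtain ⟨t₀, ht₀Icc, ht₀lt, hmem⟩ := aux_cross hQclosed h0Q hu hun
    have h1 : K ≤ dist (0 : Euc n) (t₀ • u) := by
      rw [hK]; exact infDist_le_dist_of_mem hmem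
    rw [dist_zero_left, norm_smul, Real.norm_eq_abs, abs_of_nonneg ht₀Icc.1] at h1
    nlinarith [ht₀Icc.1, norm_nonneg u]
  intro z hz hz0 x
  -- -z ∈ Q
  have hrangeeq : (Set.range fun i => ps i - p) = -(Set.range v) := by
    ext w
    simp only [Set.mem_neg, Set.mem_range, hv]
    constructor
    · rintro ⟨i, rfl⟩; exact ⟨i, by abel⟩
    · rintro ⟨i, hi⟩; exact ⟨i, by rw [← neg_eq_iff_eq_neg.mpr hi]; abel⟩
  have hnegz : -z ∈ Q := by
    rw [hrangeeq, convexHull_neg] at hz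
    exact Set.mem_neg.mp hz
  set ζ : Euc n := (‖z‖⁻¹ : ℝ) • z with hζ
  have hζnorm : ‖ζ‖ = 1 := by
    rw [hζ, norm_smul, Real.norm_eq_abs, abs_inv, abs_norm,
      inv_mul_cancel₀ (norm_ne_zero_iff.mpr hz0)]
  set w : Euc n := K • ζ with hw
  have hwnorm : ‖w‖ = K := by rw [hw, norm_smul, hζnorm, Real.norm_eq_abs, abs_of_pos hKpos]; ring
  have hwspan : w ∈ affineSpan ℝ Q := by
    have : w = (-(K * ‖z‖⁻¹)) • (-z) := by
      rw [hw, hζ, smul_smul, neg_smul, smul_neg, neg_neg]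
    rw [this]
    exact hmemspan _ _ hnegz
  have hnwspan : -w ∈ affineSpan ℝ Q := by
    have : -w = (K * ‖z‖⁻¹) • (-z) := by
      rw [hw, hζ, smul_smul, smul_neg]
    rw [this]
    exact hmemspan _ _ hnegz
  have hwQ : w ∈ Q := hball w hwspan (le_of_eq hwnorm)
  have hnwQ : -w ∈ Q := hball (-w) hnwspan (by rw [norm_neg]; exact le_of_eq hwnorm)
  -- half-space bound
  set m : ℝ := Finset.univ.inf' Finset.univ_nonempty fun i => ⟪ps i - p, x⟫ with hm
  have hhalf : ∀ q ∈ Q, ⟪q, x⟫ ≤ -m := by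
    intro q hq
    have hlin : IsLinearMap ℝ (fun u : Euc n => ⟪u, x⟫) :=
      ⟨fun a b => inner_add_left a b x, fun c a => real_inner_smul_left a x c⟩
    have hconv : Convex ℝ {u : Euc n | ⟪u, x⟫ ≤ -m} := convex_halfSpace_le hlin (-m)
    have hsub : Set.range v ⊆ {u : Euc n | ⟪u, x⟫ ≤ -m} := by
      rintro _ ⟨i, rfl⟩
      have h1 : m ≤ ⟪ps i - p, x⟫ := Finset.inf'_le _ (Finset.mem_univ i)
      have h2 : ⟪v i, x⟫ = -⟪ps i - p, x⟫ := by
        rw [hv]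
        simp only [← inner_neg_left, neg_sub]
      rw [Set.mem_setOf_eq, h2]
      linarith
    exact convexHull_min hsub hconv hq
  have h1 := hhalf w hwQ
  have h2 := hhalf (-w) hnwQ
  rw [inner_neg_left] at h2
  have hwx : ⟪w, x⟫ = K * ⟪ζ, x⟫ := real_inner_smul_left ζ x K
  have habs : K * |⟪ζ, x⟫| ≤ -m := by
    rcases abs_cases (⟪ζ, x⟫ : ℝ) with ⟨h, _⟩ | ⟨h, _⟩
    · rw [h]; rw [hwx] at h1; linarith
    · rw [h]; rw [hwx] at h2; linarith
  linarith
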